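/- For every n ≥ 0, the number of 321-avoiding permutations of {1,…,n} equals the n-th Catalan number C_n. -/

import Mathlib

open List Finset

/-- A permutation `π` of `{1,…,n}` (modeled as `Fin n`) is 321-avoiding if there are no
indices `i < j < k` with `π k < π j < π i`. -/
def Avoids321 {n : ℕ} (π : Equiv.Perm (Fin n)) : Prop :=
  ∀ i j k : Fin n, i < j → j < k → ¬(π k < π j ∧ π j < π i)

/-- 321-avoidance for lists of naturals, phrased via sublists. -/
def AvL (l : List ℕ) : Prop :=
  ∀ x y z : ℕ, [x, y, z] <+ l → z < y → y < x → False

open scoped Classical in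
/-- 321-avoiding permutation lists of `range n` whose first `k` entries are increasing. -/
noncomputable def AvSet (n k : ℕ) : Finset (List ℕ) :=
  (List.range n).permutations.toFinset.filter
    (fun l => AvL l ∧ (l.take k).Pairwise (· < ·))

noncomputable def Fc (n k : ℕ) : ℕ := (AvSet n k).card

lemma mem_avSet {n k : ℕ} {l : List ℕ} :
    l ∈ AvSet n k ↔ l.Perm (List.range n) ∧ AvL l ∧ (l.take k).Pairwise (· < ·) := by
  classical
  simp only [AvSet, Finset.mem_filter, List.mem_toFinset, List.mem_permutations]
  try tauto

lemma AvL.sublist {l₁ l₂ : List ℕ} (h : l₁ <+ l₂) (h₂ : AvL l₂) : AvL l₁ :=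
  fun x y z hs => h₂ x y z (hs.trans h)

lemma avL_of_sorted {l : List ℕ} (h : l.Pairwise (· < ·)) : AvL l := by
  intro x y z hs h1 _
  have h' : y < z :=
    List.pairwise_iff_forall_sublist.mp h ((List.sublist_cons_self x [y, z]).trans hs)
  omega

lemma sorted_prefix_of_avL {t d : List ℕ} (h : AvL (t ++ 0 :: d))
    (hn : (t ++ 0 :: d).Nodup) (h0 : (0 : ℕ) ∉ t) : t.Pairwise (· < ·) := by
  rw [List.pairwise_iff_forall_sublist]
  intro x y hxy
  have hsub : [x, y, 0] <+ t ++ 0 :: d := by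
    have : [x, y] ++ [0] <+ t ++ 0 :: d :=
      List.Sublist.append hxy (by simp)
    simpa using this
  have hy : y ∈ t := hxy.subset (by simp)
  have hy0 : (0 : ℕ) < y := Nat.pos_of_ne_zero (fun hy' => h0 (hy' ▸ hy))
  have hne : x ≠ y := by
    have hnd : t.Nodup := hn.sublist (List.sublist_append_left t (0 :: d))
    exact List.pairwise_iff_forall_sublist.mp hnd hxy
  have hnlt : ¬ y < x := fun hlt => h x y 0 hsub hy0 hlt
  omega

lemma avL_map_succ {l : List ℕ} (h : AvL l) : AvL (l.map Nat.succ) := by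
  intro x y z hs h1 h2
  rw [List.sublist_map_iff] at hs
  obtain ⟨l', hl', heq⟩ := hs
  rcases l' with _ | ⟨a, _ | ⟨b, _ | ⟨c, _ | ⟨e, l'⟩⟩⟩⟩ <;> simp at heq
  obtain ⟨hx, hy, hz⟩ := heq
  exact h a b c hl' (by omega) (by omega)

lemma avL_map_pred {l : List ℕ} (h0 : ∀ x ∈ l, x ≠ 0) (h : AvL l) :
    AvL (l.map Nat.pred) := by
  intro x y z hs h1 h2
  rw [List.sublist_map_iff] at hs
  obtain ⟨l', hl', heq⟩ := hs
  rcases l' with _ | ⟨a, _ | ⟨b, _ | ⟨c, _ | ⟨e, l'⟩⟩⟩⟩ <;> simp at heq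
  obtain ⟨hx, hy, hz⟩ := heq
  have ha : a ≠ 0 := h0 a (hl'.subset (by simp))
  have hb : b ≠ 0 := h0 b (hl'.subset (by simp))
  have hc : c ≠ 0 := h0 c (hl'.subset (by simp))
  exact h a b c hl' (by omega) (by omega)

lemma avL_cons_zero {m : List ℕ} (h : AvL m) : AvL (0 :: m) := by
  intro x y z hs h1 h2
  rcases List.sublist_cons_iff.mp hs with hs' | ⟨r, hr, hrs⟩
  · exact h x y z hs' h1 h2
  · have hx : x = 0 := by injection hr
    omega

lemma avSet_eq_of_le {n k : ℕ} (h : n ≤ k) : AvSet n k = {List.range n} := by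
  ext l
  simp only [mem_avSet, Finset.mem_singleton]
  constructor
  · rintro ⟨hp, _, hs⟩
    have hlen : l.length = n := hp.length_eq.trans List.length_range
    rw [List.take_of_length_le (by omega)] at hs
    exact List.Perm.eq_of_pairwise (fun _ _ _ _ h1 h2 => absurd (h1.trans h2) (lt_irrefl _)) hs List.pairwise_lt_range hp
  · rintro rfl
    exact ⟨List.Perm.refl _, avL_of_sorted List.pairwise_lt_range,
      List.pairwise_lt_range.sublist (List.take_sublist k _)⟩

lemma Fc_of_le {n k : ℕ} (h : n ≤ k) : Fc n k = 1 := by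
  rw [Fc, avSet_eq_of_le h, Finset.card_singleton]

lemma avSet_zero_one (n : ℕ) : AvSet n 0 = AvSet n 1 := by
  ext l
  simp only [mem_avSet]
  rcases l with _ | ⟨a, l⟩ <;> simp [List.take_succ_cons]

lemma Fc_zero_one (n : ℕ) : Fc n 0 = Fc n 1 := by
  rw [Fc, avSet_zero_one, Fc]

/-! ### Structure lemmas around the position of `0` -/

lemma split_zero {n : ℕ} {l : List ℕ} (hp : l.Perm (List.range (n + 1))) :
    ∃ t d, l = t ++ 0 :: d ∧ (0 : ℕ) ∉ t ∧ (0 : ℕ) ∉ d ∧ (t ++ 0 :: d).Nodup := by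
  have h0 : (0 : ℕ) ∈ l := hp.mem_iff.mpr (by simp)
  obtain ⟨t, d, rfl⟩ := List.append_of_mem h0
  have hnd : (t ++ 0 :: d).Nodup := hp.symm.nodup List.nodup_range
  have hnd' := List.nodup_append'.mp hnd
  refine ⟨t, d, rfl, fun ht => ?_, (List.nodup_cons.mp hnd'.2.1).1, hnd⟩
  exact hnd'.2.2 ht (by simp)

lemma k_le_length {t d : List ℕ} {k : ℕ} (ht : t ≠ [])
    (hs : ((t ++ 0 :: d).take k).Pairwise (· < ·)) : k ≤ t.length := by
  by_contra hlt
  push_neg at hlt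
  rw [List.take_append, List.take_of_length_le (by omega)] at hs
  obtain ⟨s, hsk⟩ : ∃ s, k - t.length = s + 1 := ⟨k - t.length - 1, by omega⟩
  rw [hsk, List.take_succ_cons] at hs
  obtain ⟨a, t', rfl⟩ := List.exists_cons_of_ne_nil ht
  have := (List.pairwise_append.mp hs).2.2 a (by simp) 0 (by simp)
  omega

lemma avL_insert {d : List ℕ} {k : ℕ} (hav : AvL d)
    (hs : (d.take k).Pairwise (· < ·)) : AvL (d.take k ++ 0 :: d.drop k) := by
  intro x y z hsub h1 h2
  rw [List.sublist_append_iff] at hsub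
  obtain ⟨s₁, s₂, heq, hs₁, hs₂⟩ := hsub
  rcases List.sublist_cons_iff.mp hs₂ with hs₂' | ⟨r, rfl, hr⟩
  · have hd : [x, y, z] <+ d := by
      have h' := List.Sublist.append hs₁ hs₂'
      rw [← heq, List.take_append_drop] at h'
      exact h'
    exact hav x y z hd h1 h2
  · rcases s₁ with _ | ⟨a, _ | ⟨b, _ | ⟨c, s⟩⟩⟩
    · simp only [List.nil_append, List.cons.injEq] at heq
      obtain ⟨hx, -⟩ := heq
      omega
    · simp only [List.cons_append, List.nil_append, List.cons.injEq] at heq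
      obtain ⟨-, hy, -⟩ := heq
      omega
    · simp only [List.cons_append, List.nil_append, List.cons.injEq] at heq
      obtain ⟨hx, hy, hz, -⟩ := heq
      subst hx; subst hy
      have hlt : x < y := List.pairwise_iff_forall_sublist.mp hs hs₁
      omega
    · exfalso
      injection heq with h1' heq1
      injection heq1 with h2' heq2
      injection heq2 with h3' heq3
      simp at heq3

/-! ### The `head = 0` part -/

lemma head_zero_eq_image (n m : ℕ) :
    (AvSet (n+1) (m+1)).filter (fun l => l.head? = some 0)
      = (AvSet n m).image (fun l => 0 :: l.map Nat.succ) := by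
  ext l'
  simp only [Finset.mem_filter, Finset.mem_image, mem_avSet]
  constructor
  · rintro ⟨⟨hp, hav, hs⟩, hhead⟩
    rcases l' with _ | ⟨a, d⟩
    · simp at hhead
    · have ha : a = 0 := by simpa using hhead
      subst ha
      have hd : d.Perm ((List.range n).map Nat.succ) := by
        have h' : (0 :: d).Perm (0 :: (List.range n).map Nat.succ) := by
          simpa [List.range_succ_eq_map] using hp
        exact h'.cons_inv
      have hd0 : ∀ x ∈ d, x ≠ 0 := by
        intro x hx
        have hx' := hd.subset hx
        simp only [List.mem_map] at hx'
        obtain ⟨y, -, rfl⟩ := hx'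
        simp
      have hback : d.map (Nat.succ ∘ Nat.pred) = d := by
        conv_rhs => rw [← List.map_id d]
        refine List.map_congr_left (fun x hx => ?_)
        have := hd0 x hx
        simp only [Function.comp_apply, id_eq, Nat.succ_eq_add_one, Nat.pred_eq_sub_one]
        omega
      refine ⟨d.map Nat.pred, ⟨?_, ?_, ?_⟩, ?_⟩
      · have h' := hd.map Nat.pred
        simpa [List.map_map, Function.comp_def] using h'
      · exact avL_map_pred hd0 (AvL.sublist (List.sublist_cons_self 0 d) hav)
      · rw [List.take_succ_cons, List.pairwise_cons] at hs
        rw [← List.map_take]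
        rw [List.pairwise_map]
        refine hs.2.imp_of_mem ?_
        intro a b hamem hbmem hab
        have ha0 := hd0 a ((List.take_sublist m d).subset hamem)
        have hb0 := hd0 b ((List.take_sublist m d).subset hbmem)
        simp only [Nat.pred_eq_sub_one]
        omega
      · rw [List.map_map, hback]
  · rintro ⟨l, ⟨hp, hav, hs⟩, rfl⟩
    refine ⟨⟨?_, ?_, ?_⟩, rfl⟩
    · rw [List.range_succ_eq_map]
      exact (hp.map Nat.succ).cons 0
    · exact avL_cons_zero (avL_map_succ hav)
    · rw [List.take_succ_cons, List.pairwise_cons, ← List.map_take]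
      constructor
      · intro b hb
        simp only [List.mem_map] at hb
        obtain ⟨y, -, rfl⟩ := hb
        simp
      · rw [List.pairwise_map]
        exact hs.imp (fun hab => Nat.succ_lt_succ hab)

lemma card_head_zero (n m : ℕ) :
    ((AvSet (n+1) (m+1)).filter (fun l => l.head? = some 0)).card = Fc n m := by
  rw [head_zero_eq_image, Fc]
  apply Finset.card_image_of_injective
  intro a b hab
  simp only [List.cons.injEq, true_and] at hab
  exact List.map_injective_iff.mpr Nat.succ_injective hab

/-! ### The `head ≠ 0` part -/

lemma take_not_sorted {t d : List ℕ} {k : ℕ} (hlen : t.length = k + 1) :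
    ¬ ((t ++ 0 :: d).take (k + 2)).Pairwise (· < ·) := by
  intro hsort
  have h1 : k + 2 - t.length = 1 := by omega
  rw [List.take_append, List.take_of_length_le (by omega), h1,
    show List.take 1 (0 :: d) = [0] from rfl] at hsort
  obtain ⟨a, t', rfl⟩ := List.exists_cons_of_ne_nil
    (show t ≠ [] by intro h; rw [h] at hlen; simp at hlen)
  have := (List.pairwise_append.mp hsort).2.2 a (by simp) 0 (by simp)
  omega

lemma take_sorted_of_long {t : List ℕ} (d : List ℕ) {k : ℕ} (hts : t.Pairwise (· < ·))
    (hlen : k ≤ t.length) : ((t ++ 0 :: d).take k).Pairwise (· < ·) := by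
  rw [List.take_append, show k - t.length = 0 by omega, List.take_zero,
    List.append_nil]
  exact hts.sublist (List.take_sublist k t)

lemma erase_split {t d : List ℕ} (h0 : (0 : ℕ) ∉ t) :
    (t ++ 0 :: d).erase 0 = t ++ d := by
  rw [List.erase_append_right _ h0, List.erase_cons_head]

lemma card_head_ne_zero (n m : ℕ) (hmn : m + 1 ≤ n) :
    ((AvSet (n+1) (m+1)).filter (fun l => ¬ l.head? = some 0)).card = Fc (n+1) (m+2) := by
  rw [Fc]
  refine Finset.card_bij'
    (fun l _ => if (l.take (m+2)).Pairwise (· < ·) then l else 0 :: l.erase 0)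
    (fun l _ => if l.head? = some 0 then (l.tail.take (m+1) ++ 0 :: l.tail.drop (m+1))
      else l) ?hi ?hj ?hleft ?hright
  case hi =>
    intro l hl
    simp only [Finset.mem_filter] at hl
    obtain ⟨hp, hav, hs⟩ := mem_avSet.mp hl.1
    obtain ⟨t, d, rfl, h0t, h0d, hnd⟩ := split_zero hp
    have ht : t ≠ [] := by rintro rfl; exact hl.2 rfl
    have hts := sorted_prefix_of_avL hav hnd h0t
    have hlen := k_le_length ht hs
    rcases eq_or_lt_of_le hlen with heq | hlt
    · rw [if_neg (take_not_sorted heq.symm), erase_split h0t]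
      apply mem_avSet.mpr
      refine ⟨List.perm_middle.symm.trans hp,
        avL_cons_zero (AvL.sublist ((List.sublist_cons_self 0 d).append_left t) hav), ?_⟩
      rw [show (m+2) = (m+1)+1 from rfl, List.take_succ_cons, List.take_left' heq.symm,
        List.pairwise_cons]
      exact ⟨fun b hb => Nat.pos_of_ne_zero (fun h => h0t (h ▸ hb)), hts⟩
    · have hsor : ((t ++ 0 :: d).take (m+2)).Pairwise (· < ·) :=
        take_sorted_of_long d hts (by omega)
      rw [if_pos hsor]
      exact mem_avSet.mpr ⟨hp, hav, hsor⟩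
  case hj =>
    intro l hl
    obtain ⟨hp, hav, hs⟩ := mem_avSet.mp hl
    obtain ⟨t, d, rfl, h0t, h0d, hnd⟩ := split_zero hp
    simp only [Finset.mem_filter]
    rcases t with _ | ⟨a, t'⟩
    · simp only [List.nil_append] at hp hav hs ⊢
      rw [if_pos (show ((0:ℕ) :: _).head? = some 0 from rfl), List.tail_cons]
      have hlen_d : d.length = n := by
        have h' := hp.length_eq
        simp at h'
        omega
      have hsd : (d.take (m+1)).Pairwise (· < ·) := by
        rw [show (m+2) = (m+1)+1 from rfl, List.take_succ_cons, List.pairwise_cons] at hs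
        exact hs.2
      have havd : AvL d := AvL.sublist (List.sublist_cons_self 0 d) hav
      constructor
      · apply mem_avSet.mpr
        refine ⟨?_, avL_insert havd hsd, ?_⟩
        · have hpm : (d.take (m+1) ++ 0 :: d.drop (m+1)).Perm (0 :: d) := by
            have h' := List.perm_middle (a := (0:ℕ)) (l₁ := d.take (m+1)) (l₂ := d.drop (m+1))
            rwa [List.take_append_drop] at h'
          exact hpm.trans hp
        · rw [List.take_append, List.length_take,
            show (m+1) - min (m+1) d.length = 0 by omega, List.take_zero, List.append_nil,
            List.take_take, min_self]
          exact hsd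
      · obtain ⟨e, d', rfl⟩ := List.exists_cons_of_ne_nil
          (show d ≠ [] by intro h; rw [h] at hlen_d; simp at hlen_d; omega)
        rw [List.take_succ_cons, List.cons_append, List.head?_cons]
        intro hcon
        have he : e = 0 := by injection hcon
        exact h0d (by rw [← he]; exact List.mem_cons_self)
    · have hhead : ((a :: t') ++ 0 :: d).head? = some a := rfl
      have ha : a ≠ 0 := fun h => h0t (by rw [← h]; exact List.mem_cons_self)
      have hne : ¬ ((a :: t') ++ 0 :: d).head? = some 0 := by
        rw [hhead]
        intro hcon
        exact ha (by injection hcon)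
      rw [if_neg hne]
      refine ⟨mem_avSet.mpr ⟨hp, hav, ?_⟩, hne⟩
      have htk : ((a :: t') ++ 0 :: d).take (m+1)
          = (((a :: t') ++ 0 :: d).take (m+2)).take (m+1) := by
        rw [List.take_take, min_eq_left (by omega)]
      rw [htk]
      exact hs.sublist (List.take_sublist _ _)
  case hleft =>
    intro l hl
    simp only [Finset.mem_filter] at hl
    obtain ⟨hp, hav, hs⟩ := mem_avSet.mp hl.1
    obtain ⟨t, d, rfl, h0t, h0d, hnd⟩ := split_zero hp
    have ht : t ≠ [] := by rintro rfl; exact hl.2 rfl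
    have hts := sorted_prefix_of_avL hav hnd h0t
    have hlen := k_le_length ht hs
    rcases eq_or_lt_of_le hlen with heq | hlt
    · rw [if_neg (take_not_sorted heq.symm), erase_split h0t]
      rw [if_pos (show ((0:ℕ) :: _).head? = some 0 from rfl), List.tail_cons,
        List.take_left' heq.symm, List.drop_left' heq.symm]
    · have hsor : ((t ++ 0 :: d).take (m+2)).Pairwise (· < ·) :=
        take_sorted_of_long d hts (by omega)
      rw [if_pos hsor, if_neg hl.2]
  case hright =>
    intro l hl
    obtain ⟨hp, hav, hs⟩ := mem_avSet.mp hl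
    obtain ⟨t, d, rfl, h0t, h0d, hnd⟩ := split_zero hp
    rcases t with _ | ⟨a, t'⟩
    · simp only [List.nil_append] at hp hav hs ⊢
      rw [if_pos (show ((0:ℕ) :: _).head? = some 0 from rfl), List.tail_cons]
      have hlen_d : d.length = n := by
        have h' := hp.length_eq
        simp at h'
        omega
      have hlt : (d.take (m+1)).length = m + 1 := by
        rw [List.length_take]
        omega
      have h0t' : (0 : ℕ) ∉ d.take (m+1) :=
        fun h => h0d ((List.take_sublist _ _).subset h)
      rw [if_neg (take_not_sorted hlt), erase_split h0t', List.take_append_drop]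
    · have hhead : ((a :: t') ++ 0 :: d).head? = some a := rfl
      have ha : a ≠ 0 := fun h => h0t (by rw [← h]; exact List.mem_cons_self)
      have hne : ¬ ((a :: t') ++ 0 :: d).head? = some 0 := by
        rw [hhead]
        intro hcon
        exact ha (by injection hcon)
      rw [if_neg hne, if_pos hs]

/-! ### Pascal recurrence -/

lemma pascal (n m : ℕ) (h : m + 1 ≤ n) :
    Fc (n+1) (m+1) = Fc n m + Fc (n+1) (m+2) := by
  classical
  rw [Fc, ← Finset.card_filter_add_card_filter_not
    (s := AvSet (n+1) (m+1)) (fun l => l.head? = some 0), card_head_zero,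
    card_head_ne_zero n m h]

/-! ### Arithmetic: from Pascal to Catalan -/

lemma sum_tri (N : ℕ) (g : ℕ → ℕ → ℕ) :
    ∑ i ∈ Finset.range N, ∑ j ∈ Finset.range (N - i), g i j
      = ∑ p ∈ Finset.range N, ∑ ij ∈ Finset.HasAntidiagonal.antidiagonal p, g ij.1 ij.2 := by
  induction N with
  | zero => simp
  | succ N ih =>
    have hL : ∀ i ∈ Finset.range N,
        (∑ j ∈ Finset.range (N + 1 - i), g i j)
          = ∑ j ∈ Finset.range (N - i), g i j + g i (N - i) := by
      intro i hi
      rw [Finset.mem_range] at hi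
      rw [show N + 1 - i = (N - i) + 1 by omega, Finset.sum_range_succ]
    calc ∑ i ∈ Finset.range (N + 1), ∑ j ∈ Finset.range (N + 1 - i), g i j
        = (∑ i ∈ Finset.range N, ∑ j ∈ Finset.range (N + 1 - i), g i j)
            + ∑ j ∈ Finset.range (N + 1 - N), g N j := Finset.sum_range_succ _ _
      _ = (∑ i ∈ Finset.range N, (∑ j ∈ Finset.range (N - i), g i j + g i (N - i)))
            + g N 0 := by
          rw [Finset.sum_congr rfl hL, show N + 1 - N = 1 by omega, Finset.sum_range_one]
      _ = ((∑ i ∈ Finset.range N, ∑ j ∈ Finset.range (N - i), g i j)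
            + ∑ i ∈ Finset.range N, g i (N - i)) + g N 0 := by
          rw [Finset.sum_add_distrib]
      _ = (∑ p ∈ Finset.range N, ∑ ij ∈ Finset.HasAntidiagonal.antidiagonal p, g ij.1 ij.2)
            + ∑ k ∈ Finset.range (N + 1), g k (N - k) := by
          rw [ih, Finset.sum_range_succ (f := fun k => g k (N - k)), Nat.sub_self]
          omega
      _ = ∑ p ∈ Finset.range (N + 1), ∑ ij ∈ Finset.HasAntidiagonal.antidiagonal p, g ij.1 ij.2 := by
          rw [Finset.sum_range_succ
            (f := fun p => ∑ ij ∈ Finset.HasAntidiagonal.antidiagonal p, g ij.1 ij.2),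
            Finset.Nat.sum_antidiagonal_eq_sum_range_succ_mk]

lemma KC_base {n m : ℕ} (h : n ≤ m) :
    Fc (n+1) (m+1) = ∑ i ∈ Finset.range (n - m + 1), catalan i * Fc (n - i) m := by
  rw [show n - m = 0 by omega]
  rw [Finset.sum_range_one, Nat.sub_zero, catalan_zero, one_mul,
    Fc_of_le h, Fc_of_le (by omega)]

lemma KC (n : ℕ) :
    ∀ m, Fc (n+1) (m+1) = ∑ i ∈ Finset.range (n - m + 1), catalan i * Fc (n - i) m := by
  induction n using Nat.strong_induction_on with
  | _ n ih =>
    suffices H : ∀ d m, n - m ≤ d →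
        Fc (n+1) (m+1) = ∑ i ∈ Finset.range (n - m + 1), catalan i * Fc (n - i) m by
      exact fun m => H (n - m) m le_rfl
    intro d
    induction d with
    | zero =>
      intro m hm
      exact KC_base (by omega)
    | succ d ihd =>
      intro m hm
      by_cases hnm : n ≤ m
      · exact KC_base hnm
      push_neg at hnm
      have hp : Fc (n+1) (m+1) = Fc n m + Fc (n+1) (m+2) := pascal n m (by omega)
      have h2 : Fc (n+1) (m+2) = ∑ i ∈ Finset.range (n - (m+1) + 1),
          catalan i * Fc (n - i) (m+1) := ihd (m+1) (by omega)
      rw [show n - (m+1) + 1 = n - m by omega] at h2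
      have h3 : ∀ i ∈ Finset.range (n - m),
          catalan i * Fc (n - i) (m+1)
            = ∑ j ∈ Finset.range (n - m - i), catalan i * (catalan j * Fc (n - 1 - i - j) m) := by
        intro i hi
        rw [Finset.mem_range] at hi
        rw [show n - i = (n - 1 - i) + 1 by omega, ih (n - 1 - i) (by omega) m,
          show n - 1 - i - m + 1 = n - m - i by omega, Finset.mul_sum]
      rw [hp, h2, Finset.sum_congr rfl h3, sum_tri]
      have h4 : ∀ p ∈ Finset.range (n - m),
          ∑ ij ∈ Finset.HasAntidiagonal.antidiagonal p, catalan ij.1 * (catalan ij.2 * Fc (n - 1 - ij.1 - ij.2) m)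
            = catalan (p+1) * Fc (n - 1 - p) m := by
        intro p hp'
        have h5 : ∀ ij ∈ Finset.HasAntidiagonal.antidiagonal p,
            catalan ij.1 * (catalan ij.2 * Fc (n - 1 - ij.1 - ij.2) m)
              = (catalan ij.1 * catalan ij.2) * Fc (n - 1 - p) m := by
          intro ij hij
          rw [Finset.HasAntidiagonal.mem_antidiagonal] at hij
          rw [← mul_assoc]
          congr 2
          omega
        rw [Finset.sum_congr rfl h5, ← Finset.sum_mul, ← catalan_succ']
      rw [Finset.sum_congr rfl h4,
        Finset.sum_range_succ' (fun i => catalan i * Fc (n - i) m)]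
      simp only [catalan_zero, one_mul, Nat.sub_zero]
      rw [Nat.add_comm]
      congr 1
      refine Finset.sum_congr rfl (fun p hp' => ?_)
      congr 2
      omega

lemma Fc_zero_eq_catalan : ∀ n, Fc n 0 = catalan n := by
  intro n
  induction n using Nat.strong_induction_on with
  | _ n ih =>
    match n with
    | 0 => rw [Fc_of_le (le_refl 0), catalan_zero]
    | Nat.succ n =>
      have h := KC n 0
      simp only [Nat.sub_zero, Nat.zero_add] at h
      rw [Fc_zero_one, h, catalan_succ]
      rw [← Finset.sum_range (fun i => catalan i * catalan (n - i))]
      exact Finset.sum_congr rfl (fun i hi => by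
        rw [Finset.mem_range] at hi
        rw [ih (n - i) (by omega)])

/-! ### Transfer to permutations of `Fin n` -/

lemma triple_sublist {l : List ℕ} (i j k : Fin l.length) (hij : i < j) (hjk : j < k) :
    [l.get i, l.get j, l.get k] <+ l := by
  rw [List.sublist_iff_exists_fin_orderEmbedding_get_eq]
  have hf : StrictMono (fun x : Fin 3 =>
      if (x : ℕ) = 0 then i else if (x : ℕ) = 1 then j else k) := by
    intro a b hab
    fin_cases a <;> fin_cases b <;>
      simp_all <;> first
        | exact hij | exact hjk | exact hij.trans hjk | omega
  refine ⟨OrderEmbedding.ofStrictMono _ hf, ?_⟩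
  intro ix
  fin_cases ix <;> rfl

lemma exists_indices_of_triple {l : List ℕ} {x y z : ℕ} (h : [x, y, z] <+ l) :
    ∃ i j k : Fin l.length, i < j ∧ j < k ∧ l.get i = x ∧ l.get j = y ∧ l.get k = z := by
  rw [List.sublist_iff_exists_fin_orderEmbedding_get_eq] at h
  obtain ⟨f, hf⟩ := h
  refine ⟨f ⟨0, by norm_num⟩, f ⟨1, by norm_num⟩, f ⟨2, by norm_num⟩,
    f.strictMono (by simp [Fin.mk_lt_mk]), f.strictMono (by simp [Fin.mk_lt_mk]),
    (hf ⟨0, by norm_num⟩).symm, (hf ⟨1, by norm_num⟩).symm, (hf ⟨2, by norm_num⟩).symm⟩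

lemma avL_iff_avoids {n : ℕ} (π : Equiv.Perm (Fin n)) :
    AvL ((List.finRange n).map (fun i => (π i : ℕ))) ↔ Avoids321 π := by
  have hlen : ((List.finRange n).map (fun i => (π i : ℕ))).length = n := by simp
  have hget : ∀ (i : Fin ((List.finRange n).map (fun i => (π i : ℕ))).length),
      ((List.finRange n).map (fun i => (π i : ℕ))).get i
        = (π ⟨i.1, lt_of_lt_of_le i.2 hlen.le⟩ : ℕ) := by
    intro i
    simp [List.get_eq_getElem]
  constructor
  · intro h i j k hij hjk hlt
    obtain ⟨h1, h2⟩ := hlt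
    have hs := triple_sublist (l := (List.finRange n).map (fun i => (π i : ℕ)))
      ⟨i.1, lt_of_lt_of_le i.2 hlen.ge⟩ ⟨j.1, lt_of_lt_of_le j.2 hlen.ge⟩
      ⟨k.1, lt_of_lt_of_le k.2 hlen.ge⟩
      (by simp [Fin.mk_lt_mk]; exact hij) (by simp [Fin.mk_lt_mk]; exact hjk)
    have he : [((List.finRange n).map (fun i => (π i : ℕ))).get ⟨i.1, lt_of_lt_of_le i.2 hlen.ge⟩,
        ((List.finRange n).map (fun i => (π i : ℕ))).get ⟨j.1, lt_of_lt_of_le j.2 hlen.ge⟩,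
        ((List.finRange n).map (fun i => (π i : ℕ))).get ⟨k.1, lt_of_lt_of_le k.2 hlen.ge⟩]
          = [(π i : ℕ), (π j : ℕ), (π k : ℕ)] := by
      simp only [hget, Fin.eta]
    rw [he] at hs
    exact h _ _ _ hs h1 h2
  · intro h x y z hs h1 h2
    obtain ⟨i, j, k, hij, hjk, hx, hy, hz⟩ := exists_indices_of_triple hs
    rw [hget] at hx
    rw [hget] at hy
    rw [hget] at hz
    refine h ⟨i.1, lt_of_lt_of_le i.2 hlen.le⟩ ⟨j.1, lt_of_lt_of_le j.2 hlen.le⟩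
      ⟨k.1, lt_of_lt_of_le k.2 hlen.le⟩ (by simp [Fin.mk_lt_mk]; exact hij)
      (by simp [Fin.mk_lt_mk]; exact hjk) ⟨?_, ?_⟩
    · rw [Fin.lt_def, hz, hy]
      omega
    · rw [Fin.lt_def, hy, hx]
      omega

lemma map_val_finRange (n : ℕ) : (List.finRange n).map Fin.val = List.range n := by
  apply List.ext_getElem <;> simp

lemma perm_map_range {n : ℕ} (π : Equiv.Perm (Fin n)) :
    ((List.finRange n).map (fun i => (π i : ℕ))).Perm (List.range n) := by
  have h1 : ((List.finRange n).map π).Perm (List.finRange n) := by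
    apply List.perm_of_nodup_nodup_toFinset_eq
    · exact (List.nodup_finRange n).map π.injective
    · exact List.nodup_finRange n
    · ext x
      simp only [List.mem_toFinset, List.mem_map, List.mem_finRange, true_and]
      exact ⟨fun _ => trivial, fun _ => ⟨π.symm x, by simp⟩⟩
  have h2 := h1.map Fin.val
  rw [List.map_map, map_val_finRange] at h2
  exact h2

noncomputable def permOfList {n : ℕ} (l : List ℕ) (hp : l.Perm (List.range n)) :
    Equiv.Perm (Fin n) :=
  Equiv.ofBijective
    (fun i => ⟨l.get ⟨i.1, by rw [hp.length_eq.trans List.length_range]; exact i.2⟩,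
      List.mem_range.mp (hp.subset (l.get_mem _))⟩)
    (Finite.injective_iff_bijective.mp (fun a b hab => by
      have hnd : l.Nodup := hp.symm.nodup List.nodup_range
      have h1 := congrArg Fin.val hab
      have h2 := List.nodup_iff_injective_get.mp hnd h1
      simp only [Fin.mk.injEq] at h2
      exact Fin.ext h2))

lemma map_permOfList {n : ℕ} (l : List ℕ) (hp : l.Perm (List.range n)) :
    (List.finRange n).map (fun i => ((permOfList l hp) i : ℕ)) = l := by
  have hlen : l.length = n := hp.length_eq.trans List.length_range
  apply List.ext_getElem (by simp [hlen])
  intro i h1 h2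
  simp [permOfList, Equiv.ofBijective, List.get_eq_getElem]

theorem stmt12 (n : ℕ) :
    Nat.card {π : Equiv.Perm (Fin n) // Avoids321 π} = catalan n := by
  classical
  rw [Nat.card_eq_fintype_card, Fintype.card_subtype, ← Fc_zero_eq_catalan n, Fc]
  refine Finset.card_bij' (fun π _ => (List.finRange n).map (fun i => (π i : ℕ)))
    (fun l hl => permOfList l (mem_avSet.mp hl).1) ?hi ?hj ?hleft ?hright
  case hi =>
    intro π hπ
    simp only [Finset.mem_filter] at hπ
    exact mem_avSet.mpr ⟨perm_map_range π, (avL_iff_avoids π).mpr hπ.2, by simp⟩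
  case hj =>
    intro l hl
    simp only [Finset.mem_filter]
    refine ⟨Finset.mem_univ _, ?_⟩
    have h := avL_iff_avoids (permOfList l (mem_avSet.mp hl).1)
    rw [map_permOfList] at h
    exact h.mp (mem_avSet.mp hl).2.1
  case hleft =>
    intro π hπ
    apply Equiv.ext
    intro x
    apply Fin.ext
    simp [permOfList, Equiv.ofBijective, List.get_eq_getElem]
  case hright =>
    intro l hl
    exact map_permOfList l (mem_avSet.mp hl).1
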